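/- Let β > 0, c₀ > 0, c₁ > 0, c₂ > 0, and let 0 < κ₁ < κ₀ with κ₀ > 2β. Let (λ_j)_{j≥1} be a nondecreasing sequence of reals with λ_j ≥ c₀ j^{1/β} for all j ≥ 1, let (a_j)_{j≥1} be real numbers with |a_j| ≤ c₁ λ_j^β for all j, let F_j : (0, ∞) → [0, ∞) for each j, let N be a positive integer, and let L_1, …, L_N ≥ 0. Assume: (i) for each j ≤ N, lim_{t→∞} t^{κ₁} F_j(t) = L_j; and (ii) for each j > N and all t > 0, F_j(t) ≤ c₂ λ_j^{−κ₀} t^{−κ₀}. Then for every t > 0 the series Σ_{j=1}^∞ a_j F_j(t) converges absolutely, and lim_{t→∞} t^{κ₁} Σ_{j=1}^∞ a_j F_j(t) = Σ_{j=1}^N a_j L_j. -/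
import Mathlib


open Filter

/-- Analytic core of the main theorem: with eigenvalue lower bounds
`l j ≥ c₀ j^{1/β}` (`l` nondecreasing), coefficient bounds `|a j| ≤ c₁ (l j)^β`,
tail limits `t^{κ₁} F_j(t) → L_j` for `j ≤ N` and uniform bounds
`F_j(t) ≤ c₂ (l j)^{-κ₀} t^{-κ₀}` for `j > N` (with `κ₀ > max(κ₁, 2β)`),
the series `∑_{j≥1} a_j F_j(t)` converges absolutely for each `t > 0` and
`t^{κ₁} ∑_{j≥1} a_j F_j(t) → ∑_{j=1}^N a_j L_j` as `t → ∞`. -/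
theorem stmt9
    (β c₀ c₁ c₂ κ₀ κ₁ : ℝ)
    (hβ : 0 < β) (hc₀ : 0 < c₀) (hc₁ : 0 < c₁) (hc₂ : 0 < c₂)
    (hκ₁ : 0 < κ₁) (hκ : κ₁ < κ₀) (hκβ : 2 * β < κ₀)
    (l : ℕ → ℝ) (hmono : ∀ j : ℕ, 1 ≤ j → l j ≤ l (j + 1))
    (hlb : ∀ j : ℕ, 1 ≤ j → c₀ * (j : ℝ) ^ (1 / β) ≤ l j)
    (a : ℕ → ℝ) (ha : ∀ j : ℕ, 1 ≤ j → |a j| ≤ c₁ * l j ^ β)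
    (F : ℕ → ℝ → ℝ) (hF : ∀ j : ℕ, 1 ≤ j → ∀ t : ℝ, 0 < t → 0 ≤ F j t)
    (N : ℕ) (hN : 1 ≤ N)
    (L : ℕ → ℝ) (hL : ∀ j : ℕ, 1 ≤ j → j ≤ N → 0 ≤ L j)
    (hlim : ∀ j : ℕ, 1 ≤ j → j ≤ N →
      Tendsto (fun t : ℝ => t ^ κ₁ * F j t) atTop (nhds (L j)))
    (htail : ∀ j : ℕ, N < j → ∀ t : ℝ, 0 < t → F j t ≤ c₂ * l j ^ (-κ₀) * t ^ (-κ₀)) :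
    (∀ t : ℝ, 0 < t → Summable (fun j : ℕ => |a (j + 1) * F (j + 1) t|)) ∧
    Tendsto (fun t : ℝ => t ^ κ₁ * ∑' j : ℕ, a (j + 1) * F (j + 1) t)
      atTop (nhds (∑ j ∈ Finset.Icc 1 N, a j * L j)) := by
  have hlpos : ∀ j : ℕ, 1 ≤ j → 0 < l j := by
    intro j hj
    have h1 : (0:ℝ) < c₀ * (j:ℝ) ^ (1/β) := by
      apply mul_pos hc₀
      apply Real.rpow_pos_of_pos
      exact_mod_cast Nat.pos_of_ne_zero (by omega)
    exact h1.trans_le (hlb j hj)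
  have hβκ : β - κ₀ < 0 := by linarith
  -- summability of the dominating series
  have Slem : Summable (fun k : ℕ => l (k + 1) ^ (β - κ₀)) := by
    have hp : (β - κ₀) / β < -1 := by
      rw [div_lt_iff₀ hβ]; nlinarith
    have hsum : Summable (fun k : ℕ => c₀ ^ (β - κ₀) * (((k:ℝ) + 1) ^ ((β - κ₀) / β))) := by
      apply Summable.mul_left
      have h2 := (summable_nat_add_iff 1).mpr
        ((Real.summable_nat_rpow (p := (β - κ₀)/β)).mpr hp)
      simpa using h2
    apply hsum.of_nonneg_of_le
    · intro k
      exact (Real.rpow_pos_of_pos (hlpos (k+1) (by omega)) _).le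
    · intro k
      have hkpos : (0:ℝ) < ((k:ℝ) + 1) := by positivity
      have hbase : (0:ℝ) < c₀ * ((k+1:ℕ):ℝ) ^ (1/β) := by
        apply mul_pos hc₀
        exact Real.rpow_pos_of_pos (by exact_mod_cast Nat.succ_pos k) _
      have h1 : l (k+1) ^ (β - κ₀) ≤ (c₀ * ((k+1:ℕ):ℝ) ^ (1/β)) ^ (β - κ₀) :=
        Real.rpow_le_rpow_of_nonpos hbase (hlb (k+1) (by omega)) hβκ.le
      refine h1.trans_eq ?_
      have hcast : ((k+1:ℕ):ℝ) = (k:ℝ) + 1 := by push_cast; ring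
      rw [hcast, Real.mul_rpow hc₀.le (Real.rpow_nonneg hkpos.le _),
        ← Real.rpow_mul hkpos.le]
      congr 1
      field_simp
  set Stot : ℝ := ∑' k : ℕ, l (k + 1) ^ (β - κ₀) with hStot
  have hSnonneg : ∀ k : ℕ, 0 ≤ l (k + 1) ^ (β - κ₀) := fun k =>
    (Real.rpow_pos_of_pos (hlpos (k+1) (by omega)) _).le
  -- key bound for j > N
  have hbound : ∀ j : ℕ, N < j → ∀ t : ℝ, 0 < t →
      |a j * F j t| ≤ c₁ * c₂ * t ^ (-κ₀) * l j ^ (β - κ₀) := by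
    intro j hj t ht
    have hj1 : 1 ≤ j := le_trans hN hj.le
    have hFn := hF j hj1 t ht
    rw [abs_mul, abs_of_nonneg hFn]
    calc |a j| * F j t ≤ (c₁ * l j ^ β) * (c₂ * l j ^ (-κ₀) * t ^ (-κ₀)) := by
          apply mul_le_mul (ha j hj1) (htail j hj t ht) hFn
          exact mul_nonneg hc₁.le (Real.rpow_nonneg (hlpos j hj1).le _)
      _ = c₁ * c₂ * t ^ (-κ₀) * (l j ^ β * l j ^ (-κ₀)) := by ring
      _ = c₁ * c₂ * t ^ (-κ₀) * l j ^ (β - κ₀) := by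
          rw [← Real.rpow_add (hlpos j hj1)]; ring_nf
  -- summability of the tail-shifted absolute series, uniformly in t > 0
  have habs : ∀ t : ℝ, 0 < t → Summable (fun j : ℕ => |a (j + 1) * F (j + 1) t|) := by
    intro t ht
    rw [← summable_nat_add_iff N]
    have hdom : Summable (fun k : ℕ => c₁ * c₂ * t ^ (-κ₀) * l (k + N + 1) ^ (β - κ₀)) := by
      apply Summable.mul_left
      have := (summable_nat_add_iff N).mpr Slem
      simpa [Nat.add_right_comm] using this
    apply hdom.of_nonneg_of_le (fun k => abs_nonneg _)
    intro k
    exact hbound (k + N + 1) (by omega) t ht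
  refine ⟨habs, ?_⟩
  have hsum : ∀ t : ℝ, 0 < t → Summable (fun j : ℕ => a (j + 1) * F (j + 1) t) :=
    fun t ht => (habs t ht).of_abs
  -- tail series with its bound
  have htailsum : ∀ t : ℝ, 0 < t →
      Summable (fun k : ℕ => a (k + N + 1) * F (k + N + 1) t) := by
    intro t ht
    have := (summable_nat_add_iff N).mpr (hsum t ht)
    simpa [Nat.add_right_comm] using this
  have htailbd : ∀ t : ℝ, 0 < t →
      |∑' k : ℕ, a (k + N + 1) * F (k + N + 1) t| ≤ c₁ * c₂ * Stot * t ^ (-κ₀) := by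
    intro t ht
    have habs2 : Summable (fun k : ℕ => |a (k + N + 1) * F (k + N + 1) t|) := by
      have := (summable_nat_add_iff N).mpr (habs t ht)
      simpa [Nat.add_right_comm] using this
    have h1 : |∑' k : ℕ, a (k + N + 1) * F (k + N + 1) t|
        ≤ ∑' k : ℕ, |a (k + N + 1) * F (k + N + 1) t| := by
      have h1' := norm_tsum_le_tsum_norm (f := fun k : ℕ => a (k + N + 1) * F (k + N + 1) t)
        (by simpa only [Real.norm_eq_abs] using habs2)
      simpa only [Real.norm_eq_abs] using h1' 
    have hdom : Summable (fun k : ℕ => c₁ * c₂ * t ^ (-κ₀) * l (k + N + 1) ^ (β - κ₀)) := by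
      apply Summable.mul_left
      have := (summable_nat_add_iff N).mpr Slem
      simpa [Nat.add_right_comm] using this
    have h2 : ∑' k : ℕ, |a (k + N + 1) * F (k + N + 1) t|
        ≤ ∑' k : ℕ, c₁ * c₂ * t ^ (-κ₀) * l (k + N + 1) ^ (β - κ₀) :=
      Summable.tsum_le_tsum (fun k => hbound (k + N + 1) (by omega) t ht) habs2 hdom
    have hshift : Summable (fun k : ℕ => l (k + N + 1) ^ (β - κ₀)) := by
      have := (summable_nat_add_iff N).mpr Slem
      simpa [Nat.add_right_comm] using this
    have h3 : ∑' k : ℕ, c₁ * c₂ * t ^ (-κ₀) * l (k + N + 1) ^ (β - κ₀)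
        = c₁ * c₂ * t ^ (-κ₀) * ∑' k : ℕ, l (k + N + 1) ^ (β - κ₀) := by
      rw [tsum_mul_left]
    have h4 : ∑' k : ℕ, l (k + N + 1) ^ (β - κ₀) ≤ Stot := by
      have hsplit := Summable.sum_add_tsum_nat_add N Slem
      have hpart : 0 ≤ ∑ i ∈ Finset.range N, l (i + 1) ^ (β - κ₀) :=
        Finset.sum_nonneg fun i _ => hSnonneg i
      calc ∑' k : ℕ, l ((k + N) + 1) ^ (β - κ₀)
          ≤ (∑ i ∈ Finset.range N, l (i + 1) ^ (β - κ₀))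
            + ∑' k : ℕ, l ((k + N) + 1) ^ (β - κ₀) := le_add_of_nonneg_left hpart
        _ = Stot := hsplit
    calc |∑' k : ℕ, a (k + N + 1) * F (k + N + 1) t|
        ≤ ∑' k : ℕ, |a (k + N + 1) * F (k + N + 1) t| := h1
      _ ≤ ∑' k : ℕ, c₁ * c₂ * t ^ (-κ₀) * l (k + N + 1) ^ (β - κ₀) := h2
      _ = c₁ * c₂ * t ^ (-κ₀) * ∑' k : ℕ, l (k + N + 1) ^ (β - κ₀) := h3
      _ ≤ c₁ * c₂ * t ^ (-κ₀) * Stot := by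
          apply mul_le_mul_of_nonneg_left h4
          positivity
      _ = c₁ * c₂ * Stot * t ^ (-κ₀) := by ring
  -- decomposition of t^κ₁ * tsum
  have hdecomp : ∀ t : ℝ, 0 < t →
      t ^ κ₁ * ∑' j : ℕ, a (j + 1) * F (j + 1) t
        = (∑ k ∈ Finset.range N, t ^ κ₁ * (a (k + 1) * F (k + 1) t))
          + t ^ κ₁ * ∑' k : ℕ, a (k + N + 1) * F (k + N + 1) t := by
    intro t ht
    have hsplit := Summable.sum_add_tsum_nat_add N (hsum t ht)
    have heq : (∑' k : ℕ, a ((k + N) + 1) * F ((k + N) + 1) t)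
        = ∑' k : ℕ, a (k + N + 1) * F (k + N + 1) t := by
      congr 1
    rw [← hsplit, heq, mul_add, Finset.mul_sum]
  -- limit of the head
  have hhead : Tendsto (fun t : ℝ => ∑ k ∈ Finset.range N, t ^ κ₁ * (a (k + 1) * F (k + 1) t))
      atTop (nhds (∑ k ∈ Finset.range N, a (k + 1) * L (k + 1))) := by
    apply tendsto_finset_sum
    intro k hk
    have hk' : k + 1 ≤ N := Finset.mem_range.mp hk
    have := (hlim (k + 1) (by omega) hk').const_mul (a (k + 1))
    exact Tendsto.congr (fun t => by ring) this
  -- limit of the tail : 0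
  have htail0 : Tendsto (fun t : ℝ => t ^ κ₁ * ∑' k : ℕ, a (k + N + 1) * F (k + N + 1) t)
      atTop (nhds 0) := by
    have hg : Tendsto (fun t : ℝ => c₁ * c₂ * Stot * t ^ (-(κ₀ - κ₁))) atTop (nhds 0) := by
      have := (tendsto_rpow_neg_atTop (by linarith : (0:ℝ) < κ₀ - κ₁)).const_mul
        (c₁ * c₂ * Stot)
      simpa using this
    have hb : ∀ᶠ t : ℝ in atTop,
        ‖t ^ κ₁ * ∑' k : ℕ, a (k + N + 1) * F (k + N + 1) t‖
          ≤ c₁ * c₂ * Stot * t ^ (-(κ₀ - κ₁)) := by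
      filter_upwards [eventually_gt_atTop (0:ℝ)] with t ht
      rw [Real.norm_eq_abs, abs_mul, abs_of_nonneg (Real.rpow_nonneg ht.le _)]
      calc t ^ κ₁ * |∑' k : ℕ, a (k + N + 1) * F (k + N + 1) t|
          ≤ t ^ κ₁ * (c₁ * c₂ * Stot * t ^ (-κ₀)) :=
            mul_le_mul_of_nonneg_left (htailbd t ht) (Real.rpow_nonneg ht.le _)
        _ = c₁ * c₂ * Stot * (t ^ κ₁ * t ^ (-κ₀)) := by ring
        _ = c₁ * c₂ * Stot * t ^ (-(κ₀ - κ₁)) := by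
            rw [← Real.rpow_add ht]; ring_nf
    exact squeeze_zero_norm' hb hg
  -- combine
  have hfinal : (∑ j ∈ Finset.Icc 1 N, a j * L j)
      = (∑ k ∈ Finset.range N, a (k + 1) * L (k + 1)) + 0 := by
    rw [add_zero, ← Finset.Ico_add_one_right_eq_Icc, Finset.sum_Ico_eq_sum_range]
    simp [Nat.add_comm]
  rw [hfinal]
  have hcomb := hhead.add htail0
  apply hcomb.congr'
  filter_upwards [eventually_gt_atTop (0:ℝ)] with t ht
  exact (hdecomp t ht).symm
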